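/- Let σ be a positive-definite density matrix in M_n(ℂ) with φ = tr(σ ·), and suppose Φ : M_n(ℂ) → M_n(ℂ) is completely positive and GNS-symmetric with respect to φ. Define L(x) = ½(Φ(1)x + xΦ(1)) − Φ(x). Then L is GNS-symmetric with respect to φ, L(1) = 0, and L is conditionally negative definite: whenever a_1,…,a_m, x_1,…,x_m ∈ M_n(ℂ) satisfy Σ_j a_j x_j = 0, one has Σ_{j,k} x_j* L(a_j* a_k) x_k ≤ 0. -/

import Mathlib

open scoped ComplexOrder
open Matrix Complex

abbrev Mat (n : ℕ) := Matrix (Fin n) (Fin n) ℂ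

/-- Complete positivity of a map on `M_n(ℂ)`: all sums `∑ xⱼ* P(aⱼ* aₖ) xₖ`
are positive semidefinite. -/
def IsCP {n : ℕ} (P : Mat n → Mat n) : Prop :=
  ∀ (m : ℕ) (a x : Fin m → Mat n),
    (∑ j, ∑ k, (x j)ᴴ * P ((a j)ᴴ * a k) * x k).PosSemidef

/-- GNS-symmetry of `P` with respect to the state `φ = tr(σ ·)`. -/
def IsGNSSymm {n : ℕ} (σ : Mat n) (P : Mat n → Mat n) : Prop :=
  ∀ x y : Mat n, (σ * (P x)ᴴ * y).trace = (σ * xᴴ * P y).trace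

/-- Complex power `σ^z` of a positive definite matrix, via the spectral
decomposition. -/
noncomputable def mpow {n : ℕ} {σ : Mat n} (hσ : σ.PosDef) (z : ℂ) : Mat n :=
  (hσ.1.eigenvectorUnitary : Mat n) *
    Matrix.diagonal (fun i => (hσ.1.eigenvalues i : ℂ) ^ z) *
    star (hσ.1.eigenvectorUnitary : Mat n)

lemma trace_mul_conjT_zero {n : ℕ} (M : Mat n) (h : (M * Mᴴ).trace = 0) : M = 0 := by
  have h' : ∑ i, ∑ j, (Complex.normSq (M i j) : ℝ) = 0 := by
    have : (M * Mᴴ).trace = ∑ i, ∑ j, (Complex.normSq (M i j) : ℂ) := by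
      simp [Matrix.trace, Matrix.mul_apply, Matrix.diag, Complex.mul_conj]
    rw [this] at h
    exact_mod_cast h
  ext i j
  have h1 := (Finset.sum_eq_zero_iff_of_nonneg (fun i _ => Finset.sum_nonneg
    (fun j _ => Complex.normSq_nonneg _))).mp h' i (Finset.mem_univ i)
  have h2 := (Finset.sum_eq_zero_iff_of_nonneg (fun j _ => Complex.normSq_nonneg _)).mp h1 j
    (Finset.mem_univ j)
  simpa using Complex.normSq_eq_zero.mp h2

lemma cp_pos {n : ℕ} (Φ : Mat n →ₗ[ℂ] Mat n) (hCP : IsCP Φ) (a : Mat n) :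
    (Φ (aᴴ * a)).PosSemidef := by
  have := hCP 1 (fun _ => a) (fun _ => 1)
  simpa using this

lemma cp_star {n : ℕ} (Φ : Mat n →ₗ[ℂ] Mat n) (hCP : IsCP Φ) (x : Mat n) :
    Φ xᴴ = (Φ x)ᴴ := by
  have herm : ∀ h : Mat n, hᴴ = h → (Φ h)ᴴ = Φ h := by
    intro h hh
    have key : (2:ℂ) • h = (1 + h)ᴴ * (1 + h) - 1ᴴ * 1 - hᴴ * h := by
      simp [Matrix.add_mul, Matrix.mul_add, hh, two_smul]
      abel
    have e1 := (cp_pos Φ hCP (1 + h)).1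
    have e2 := (cp_pos Φ hCP (1 : Mat n)).1
    have e3 := (cp_pos Φ hCP h).1
    have h2 : (Φ ((2:ℂ) • h))ᴴ = Φ ((2:ℂ) • h) := by
      rw [key]
      simp only [map_sub, conjTranspose_sub]
      rw [e1, e2, e3]
    rw [_root_.map_smul, Matrix.conjTranspose_smul] at h2
    have h2' : (2:ℂ) • (Φ h)ᴴ = (2:ℂ) • Φ h := by
      convert h2 using 2
      simp
    exact smul_right_injective _ (by norm_num : (2:ℂ) ≠ 0) h2'
  have hh : (x + xᴴ)ᴴ = x + xᴴ := by
    rw [conjTranspose_add, conjTranspose_conjTranspose, add_comm]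
  have hk : (Complex.I • x - Complex.I • xᴴ)ᴴ = Complex.I • x - Complex.I • xᴴ := by
    rw [conjTranspose_sub, Matrix.conjTranspose_smul, Matrix.conjTranspose_smul,
      conjTranspose_conjTranspose, Complex.star_def, Complex.conj_I]
    module
  have e1 := herm _ hh
  have e2 := herm _ hk
  have hIk : Complex.I • (Complex.I • x - Complex.I • xᴴ) = xᴴ - x := by
    rw [smul_sub, smul_smul, smul_smul, Complex.I_mul_I, neg_one_smul, neg_one_smul]
    abel
  have h2xh : (2:ℂ) • xᴴ = (x + xᴴ) + Complex.I • (Complex.I • x - Complex.I • xᴴ) := by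
    rw [hIk]; module
  have h2x : (2:ℂ) • x = (x + xᴴ) - Complex.I • (Complex.I • x - Complex.I • xᴴ) := by
    rw [hIk]; module
  have main : (2:ℂ) • Φ xᴴ = (2:ℂ) • (Φ x)ᴴ := by
    have lhs : (2:ℂ) • Φ xᴴ
        = Φ (x + xᴴ) + Complex.I • Φ (Complex.I • x - Complex.I • xᴴ) := by
      rw [← _root_.map_smul, h2xh, map_add, _root_.map_smul]
    have rhs : (2:ℂ) • (Φ x)ᴴ
        = Φ (x + xᴴ) + Complex.I • Φ (Complex.I • x - Complex.I • xᴴ) := by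
      have : (2:ℂ) • (Φ x)ᴴ = (Φ ((2:ℂ) • x))ᴴ := by
        rw [_root_.map_smul, Matrix.conjTranspose_smul]
        congr 1
        simp
      rw [this, h2x, map_sub, _root_.map_smul, conjTranspose_sub,
        Matrix.conjTranspose_smul, Complex.star_def, Complex.conj_I, e1, e2, neg_smul,
        sub_neg_eq_add]
    rw [lhs, rhs]
  exact smul_right_injective _ (by norm_num : (2:ℂ) ≠ 0) main

lemma phi_one_herm {n : ℕ} (Φ : Mat n →ₗ[ℂ] Mat n) (hCP : IsCP Φ) : (Φ 1)ᴴ = Φ 1 := by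
  have := (cp_pos Φ hCP 1).1
  simpa using this.eq

lemma central {n : ℕ} (σ : Mat n) (hσh : σᴴ = σ) (Φ : Mat n →ₗ[ℂ] Mat n)
    (hCP : IsCP Φ) (hGNS : IsGNSSymm σ Φ) : σ * Φ 1 = Φ 1 * σ := by
  have h1 := phi_one_herm Φ hCP
  have e1 : ∀ y : Mat n, (σ * Φ 1 * y).trace = (σ * Φ y).trace := by
    intro y
    have := hGNS 1 y
    simpa [h1] using this
  have e2 : ∀ y : Mat n, (σ * Φ y).trace = (σ * y * Φ 1).trace := by
    intro y
    have := hGNS yᴴ 1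
    simpa [cp_star Φ hCP y] using this
  have e3 : ∀ y : Mat n, ((σ * Φ 1 - Φ 1 * σ) * y).trace = 0 := by
    intro y
    rw [Matrix.sub_mul, trace_sub, sub_eq_zero, e1, e2, Matrix.mul_assoc,
      Matrix.trace_mul_comm, Matrix.mul_assoc, Matrix.trace_mul_comm]
  have := trace_mul_conjT_zero _ (e3 (σ * Φ 1 - Φ 1 * σ)ᴴ)
  rwa [sub_eq_zero] at this

/-- if `Φ` is completely positive and GNS-symmetric, then
`L(x) = ½(Φ(1)x + xΦ(1)) − Φ(x)` is GNS-symmetric, vanishes at `1`, and is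
conditionally negative definite. -/
theorem stmt_3 {n : ℕ} (σ : Mat n) (hσ : σ.PosDef) (htr : σ.trace = 1)
    (Φ : Mat n →ₗ[ℂ] Mat n) (hCP : IsCP Φ) (hGNS : IsGNSSymm σ Φ)
    (L : Mat n → Mat n)
    (hL : ∀ x, L x = (1/2 : ℂ) • (Φ 1 * x + x * Φ 1) - Φ x) :
    IsGNSSymm σ L ∧ L 1 = 0 ∧
      ∀ (m : ℕ) (a x : Fin m → Mat n), (∑ j, a j * x j) = 0 →
        (-(∑ j, ∑ k, (x j)ᴴ * L ((a j)ᴴ * a k) * x k)).PosSemidef := by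
  have h1 := phi_one_herm Φ hCP
  have hc := central σ hσ.1 Φ hCP hGNS
  refine ⟨?_, ?_, ?_⟩
  · -- GNS symmetry of L
    intro x y
    have hL' : (L x)ᴴ = (1/2:ℂ) • (xᴴ * Φ 1 + Φ 1 * xᴴ) - (Φ x)ᴴ := by
      rw [hL x]
      simp [Matrix.conjTranspose_smul, conjTranspose_add, conjTranspose_mul, h1]
    have shift : ∀ C : Mat n, (σ * Φ 1 * C).trace = (σ * C * Φ 1).trace := by
      intro C
      rw [hc, Matrix.mul_assoc, Matrix.trace_mul_comm]
    have g1 : (σ * ((Φ x)ᴴ * y)).trace = (σ * (xᴴ * Φ y)).trace := by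
      simpa [Matrix.mul_assoc] using hGNS x y
    have g2 : (σ * (Φ 1 * (xᴴ * y))).trace = (σ * (xᴴ * (y * Φ 1))).trace := by
      simpa [Matrix.mul_assoc] using shift (xᴴ * y)
    rw [hL', hL y]
    simp only [Matrix.sub_mul, Matrix.mul_sub, Matrix.add_mul, Matrix.mul_add,
      Matrix.smul_mul, Matrix.mul_smul, smul_add, Matrix.mul_assoc, trace_add,
      trace_sub, trace_smul, g1, g2]
  · -- L 1 = 0
    rw [hL 1, mul_one, one_mul]
    module
  · -- conditional negativity
    intro m a x hax
    have term : ∀ j k, (x j)ᴴ * L ((a j)ᴴ * a k) * x k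
        = (1/2:ℂ) • (((x j)ᴴ * (Φ 1 * (a j)ᴴ)) * (a k * x k))
        + ((1/2:ℂ) • (((x j)ᴴ * (a j)ᴴ) * (a k * (Φ 1 * x k)))
        - (x j)ᴴ * Φ ((a j)ᴴ * a k) * x k) := by
      intro j k
      rw [hL]
      simp only [smul_add, Matrix.sub_mul, Matrix.add_mul, Matrix.smul_mul,
        Matrix.mul_sub, Matrix.mul_add, Matrix.mul_smul, Matrix.mul_assoc]
      abel
    have hsum2 : ∑ j, (x j)ᴴ * (a j)ᴴ = 0 := by
      have e : ∑ j, (x j)ᴴ * (a j)ᴴ = (∑ j, a j * x j)ᴴ := by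
        rw [Matrix.conjTranspose_sum]
        simp [conjTranspose_mul]
      rw [e, hax, conjTranspose_zero]
    have key : (∑ j, ∑ k, (x j)ᴴ * L ((a j)ᴴ * a k) * x k)
        = -(∑ j, ∑ k, (x j)ᴴ * Φ ((a j)ᴴ * a k) * x k) := by
      calc ∑ j, ∑ k, (x j)ᴴ * L ((a j)ᴴ * a k) * x k
          = (1/2:ℂ) • ((∑ j, (x j)ᴴ * (Φ 1 * (a j)ᴴ)) * ∑ k, a k * x k)
            + ((1/2:ℂ) • ((∑ j, (x j)ᴴ * (a j)ᴴ) * ∑ k, a k * (Φ 1 * x k))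
            - ∑ j, ∑ k, (x j)ᴴ * Φ ((a j)ᴴ * a k) * x k) := by
            simp only [term, Finset.sum_add_distrib, Finset.sum_sub_distrib,
              ← Finset.smul_sum, ← Finset.mul_sum, ← Finset.sum_mul]
        _ = -(∑ j, ∑ k, (x j)ᴴ * Φ ((a j)ᴴ * a k) * x k) := by
            rw [hax, hsum2]
            simp
    rw [key, neg_neg]
    exact hCP m a x
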